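/- arXiv:2601.17619 — 2 statements merged into one kernel-verified Lean document; each statement's English description precedes it below -/
import Mathlib

section
/- The map T ↦ {L(T) : T ∈ T with at least one edge} is a bijection between the set of complete tubings of G and the set of admissible tubings of L(G). -/
open SimpleGraph

namespace Cosmo

variable {V : Type*}

/-- A tube of `G` is a connected subgraph. -/
def IsTube (G : SimpleGraph V) (T : G.Subgraph) : Prop := T.Connected

/-- Tubes are nested if one contains the other. -/
def Nested {G : SimpleGraph V} (S T : G.Subgraph) : Prop := S ≤ T ∨ T ≤ S

/-- Tubes overlap if their (vertex) intersection is nonempty and they are not nested. -/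
def Overlapping {G : SimpleGraph V} (S T : G.Subgraph) : Prop :=
  (S.verts ∩ T.verts).Nonempty ∧ ¬ Nested S T

/-- Tubes are incompatible if there is an edge of `G` between them and they are not nested. -/
def Incompatible {G : SimpleGraph V} (S T : G.Subgraph) : Prop :=
  (∃ u w, G.Adj u w ∧ u ∈ S.verts ∧ w ∈ T.verts) ∧ ¬ Nested S T

/-- Tubes are compatible if they are not incompatible. -/
def Compatible {G : SimpleGraph V} (S T : G.Subgraph) : Prop := ¬ Incompatible S T

/-- A complete tubing: a maximal collection of pairwise non-overlapping tubes. -/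
def IsCompleteTubing (G : SimpleGraph V) (𝒯 : Set G.Subgraph) : Prop :=
  Maximal (fun 𝒞 : Set G.Subgraph =>
    (∀ T ∈ 𝒞, IsTube G T) ∧ 𝒞.Pairwise fun S T => ¬ Overlapping S T) 𝒯

/-- An admissible tubing: a maximal collection of pairwise compatible induced tubes. -/
def IsAdmissibleTubing (G : SimpleGraph V) (𝒯 : Set G.Subgraph) : Prop :=
  Maximal (fun 𝒞 : Set G.Subgraph =>
    (∀ T ∈ 𝒞, IsTube G T ∧ T.IsInduced) ∧ 𝒞.Pairwise Compatible) 𝒯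

/-- A labeling of an admissible tubing by the vertices, as in the bijection lemma:
`g v` is the tube associated to `v`, i.e. `v ∈ g v` and `v` avoids all strictly
smaller tubes of the tubing. -/
def IsVertexLabeling (G : SimpleGraph V) (𝒯 : Set G.Subgraph) (g : V → G.Subgraph) : Prop :=
  Set.BijOn g Set.univ 𝒯 ∧ ∀ v, v ∈ (g v).verts ∧ ∀ S ∈ 𝒯, S < g v → v ∉ S.verts


/-- The induced subgraph of the line graph `L(G)` on the edges of a subgraph `T` of `G`. -/
def lineSubgraph {V : Type*} (G : SimpleGraph V) (T : G.Subgraph) : (G.lineGraph).Subgraph where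
  verts := {e | (e : Sym2 V) ∈ T.edgeSet}
  Adj e f := (e : Sym2 V) ∈ T.edgeSet ∧ (f : Sym2 V) ∈ T.edgeSet ∧ (G.lineGraph).Adj e f
  adj_sub h := h.2.2
  edge_vert h := h.1
  symm := ⟨fun e f h => ⟨h.2.1, h.1, h.2.2.symm⟩⟩

variable {G : SimpleGraph V}

lemma nested_symm {S T : G.Subgraph} (h : Nested S T) : Nested T S := h.symm

lemma not_overlapping_symm : Symmetric (fun S T : G.Subgraph => ¬ Overlapping S T) := by
  intro S T h ⟨hne, hn⟩
  exact h ⟨by rwa [Set.inter_comm], fun hn' => hn hn'.symm⟩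

lemma compatible_symm : Symmetric (@Compatible V G) := by
  intro S T h ⟨⟨u, w, hadj, hu, hw⟩, hn⟩
  exact h ⟨⟨w, u, hadj.symm, hw, hu⟩, fun hn' => hn hn'.symm⟩

lemma compatible_of_nested {S T : G.Subgraph} (h : Nested S T) : Compatible S T :=
  fun hi => hi.2 h

/-- The pullback of a subgraph of the line graph to a subgraph of `G`. -/
def pull (G : SimpleGraph V) (U : (G.lineGraph).Subgraph) : G.Subgraph where
  verts := {v | ∃ e ∈ U.verts, v ∈ (e : Sym2 V)}
  Adj u w := ∃ h : G.Adj u w, (⟨s(u, w), h⟩ : G.edgeSet) ∈ U.verts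
  adj_sub h := h.1
  edge_vert h := ⟨_, h.2, Sym2.mem_mk_left _ _⟩
  symm := ⟨fun u w h => by
    obtain ⟨h, hm⟩ := h
    exact ⟨h.symm, by convert hm using 2; exact Subtype.ext Sym2.eq_swap⟩⟩

lemma pull_verts {U : (G.lineGraph).Subgraph} {v : V} :
    v ∈ (pull G U).verts ↔ ∃ e ∈ U.verts, v ∈ (e : Sym2 V) := Iff.rfl

lemma mem_edgeSet_pull {U : (G.lineGraph).Subgraph} (e : G.edgeSet) :
    (e : Sym2 V) ∈ (pull G U).edgeSet ↔ e ∈ U.verts := by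
  obtain ⟨e, he⟩ := e
  induction e with
  | h a b =>
    rw [Subgraph.mem_edgeSet]
    constructor
    · rintro ⟨h, hm⟩; exact hm
    · intro hm; exact ⟨he, hm⟩

lemma mem_verts_of_mem_edge {T : G.Subgraph} {e : Sym2 V} (he : e ∈ T.edgeSet)
    {v : V} (hv : v ∈ e) : v ∈ T.verts := by
  induction e with
  | h a b =>
    rw [Subgraph.mem_edgeSet] at he
    rcases Sym2.mem_iff.mp hv with rfl | rfl
    · exact he.fst_mem
    · exact he.snd_mem

/-- In a connected subgraph with an edge, every vertex lies on an edge. -/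
lemma exists_edge_of_mem_verts {T : G.Subgraph} (hT : T.Connected)
    (he : T.edgeSet.Nonempty) {v : V} (hv : v ∈ T.verts) :
    ∃ e ∈ T.edgeSet, v ∈ e := by
  obtain ⟨e, heT⟩ := he
  revert heT
  refine Sym2.inductionOn e ?_
  intro a b heT
  have hab : T.Adj a b := Subgraph.mem_edgeSet.mp heT
  by_cases hva : (⟨v, hv⟩ : T.verts) = ⟨a, hab.fst_mem⟩
  · have : v = a := congrArg Subtype.val hva
    subst this
    exact ⟨s(v, b), heT, Sym2.mem_mk_left _ _⟩
  · obtain ⟨p⟩ := hT ⟨v, hv⟩ ⟨a, hab.fst_mem⟩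
    obtain ⟨x, h, q, -⟩ := SimpleGraph.Walk.not_nil_iff.mp (SimpleGraph.Walk.not_nil_of_ne hva (p := p))
    have hx : T.Adj v x.1 := h
    exact ⟨s(v, x.1), Subgraph.mem_edgeSet.mpr hx, Sym2.mem_mk_left _ _⟩

/-- An edgeless tube is a single vertex. -/
lemma eq_singleton_of_edgeless {T : G.Subgraph} (hT : T.Connected)
    (he : ¬ T.edgeSet.Nonempty) : ∃ v, T = G.singletonSubgraph v := by
  obtain ⟨v, hv⟩ := hT.nonempty
  refine ⟨v, ?_⟩
  have hadj : ∀ u w, ¬ T.Adj u w := fun u w h => he ⟨s(u, w), Subgraph.mem_edgeSet.mpr h⟩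
  ext w
  · simp only [singletonSubgraph_verts, Set.mem_singleton_iff]
    constructor
    · intro hw
      obtain ⟨p⟩ := hT ⟨w, hw⟩ ⟨v, hv⟩
      cases p with
      | nil => rfl
      | cons h _ => exact absurd h (hadj _ _)
    · rintro rfl; exact hv
  · simp only [singletonSubgraph_adj, Pi.bot_apply]
    constructor
    · intro h; exact absurd h (hadj _ _)
    · rintro ⟨⟩

/-- An edgy connected subgraph is determined by its edge set. -/
lemma eq_of_edgeSet_eq {T₁ T₂ : G.Subgraph} (h₁ : T₁.Connected) (h₂ : T₂.Connected)
    (he₁ : T₁.edgeSet.Nonempty) (he₂ : T₂.edgeSet.Nonempty)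
    (h : T₁.edgeSet = T₂.edgeSet) : T₁ = T₂ := by
  ext v
  · constructor
    · intro hv
      obtain ⟨e, he, hve⟩ := exists_edge_of_mem_verts h₁ he₁ hv
      exact mem_verts_of_mem_edge (h ▸ he) hve
    · intro hv
      obtain ⟨e, he, hve⟩ := exists_edge_of_mem_verts h₂ he₂ hv
      exact mem_verts_of_mem_edge (h ▸ he : e ∈ T₁.edgeSet) hve
  · rw [← Subgraph.mem_edgeSet, ← Subgraph.mem_edgeSet, h]

lemma lineSubgraph_verts (T : G.Subgraph) :
    (lineSubgraph G T).verts = {e : G.edgeSet | (e : Sym2 V) ∈ T.edgeSet} := rfl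

lemma lineSubgraph_isInduced (T : G.Subgraph) : (lineSubgraph G T).IsInduced :=
  fun _ hv _ hw hadj => ⟨hv, hw, hadj⟩

lemma lineSubgraph_mono {T₁ T₂ : G.Subgraph} (h : T₁ ≤ T₂) :
    lineSubgraph G T₁ ≤ lineSubgraph G T₂ := by
  constructor
  · intro e he; exact Subgraph.edgeSet_mono h he
  · rintro e f ⟨h1, h2, h3⟩
    exact ⟨Subgraph.edgeSet_mono h h1, Subgraph.edgeSet_mono h h2, h3⟩

lemma pull_mono {U₁ U₂ : (G.lineGraph).Subgraph} (h : U₁ ≤ U₂) :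
    pull G U₁ ≤ pull G U₂ := by
  constructor
  · rintro v ⟨e, he, hve⟩; exact ⟨e, h.1 he, hve⟩
  · rintro u w ⟨hadj, hm⟩; exact ⟨hadj, h.1 hm⟩

lemma le_lineSubgraph_pull (U : (G.lineGraph).Subgraph) : U ≤ lineSubgraph G (pull G U) := by
  constructor
  · intro e he; exact (mem_edgeSet_pull e).mpr he
  · intro e f h
    exact ⟨(mem_edgeSet_pull e).mpr (U.edge_vert h),
      (mem_edgeSet_pull f).mpr (U.edge_vert h.symm), U.adj_sub h⟩

lemma lineSubgraph_pull_eq {U : (G.lineGraph).Subgraph} (hU : U.IsInduced) :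
    lineSubgraph G (pull G U) = U := by
  ext e
  · rw [lineSubgraph_verts, Set.mem_setOf_eq, mem_edgeSet_pull]
  · rename_i f
    constructor
    · rintro ⟨h1, h2, h3⟩
      exact hU ((mem_edgeSet_pull e).mp h1) ((mem_edgeSet_pull f).mp h2) h3
    · intro h; exact (le_lineSubgraph_pull U).2 h

lemma pull_lineSubgraph_le (T : G.Subgraph) : pull G (lineSubgraph G T) ≤ T := by
  constructor
  · rintro v ⟨e, he, hve⟩; exact mem_verts_of_mem_edge he hve
  · rintro u w ⟨hadj, hm⟩; exact Subgraph.mem_edgeSet.mp hm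

lemma pull_lineSubgraph_eq {T : G.Subgraph} (hT : T.Connected) (he : T.edgeSet.Nonempty) :
    pull G (lineSubgraph G T) = T := by
  refine le_antisymm (pull_lineSubgraph_le T) ?_
  constructor
  · intro v hv
    obtain ⟨e, heT, hve⟩ := exists_edge_of_mem_verts hT he hv
    have heG : e ∈ G.edgeSet := T.edgeSet_subset heT
    exact ⟨⟨e, heG⟩, heT, hve⟩
  · intro u w h
    exact ⟨T.adj_sub h, Subgraph.mem_edgeSet.mpr h⟩

lemma pull_edgeSet_nonempty {U : (G.lineGraph).Subgraph} (hU : U.verts.Nonempty) :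
    (pull G U).edgeSet.Nonempty := by
  obtain ⟨e, he⟩ := hU
  exact ⟨e, (mem_edgeSet_pull e).mpr he⟩

lemma sym2_exists_mem (e : Sym2 V) : ∃ a, a ∈ e :=
  Sym2.inductionOn e fun a b => ⟨a, Sym2.mem_mk_left a b⟩

lemma reachable_pull_of_mem_edge {U : (G.lineGraph).Subgraph} (e : G.edgeSet)
    (he : e ∈ U.verts) {v w : V} (hv : v ∈ (e : Sym2 V)) (hw : w ∈ (e : Sym2 V)) :
    (pull G U).coe.Reachable ⟨v, ⟨e, he, hv⟩⟩ ⟨w, ⟨e, he, hw⟩⟩ := by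
  obtain ⟨e', heG⟩ := e
  revert heG
  refine Sym2.inductionOn e' ?_
  intro a b heG he hv hw
  have hadj : G.Adj a b := (SimpleGraph.mem_edgeSet G).mp heG
  have hab : (pull G U).Adj a b := ⟨hadj, he⟩
  have hba : (pull G U).Adj b a := hab.symm
  rcases Sym2.mem_iff.mp hv with rfl | rfl <;> rcases Sym2.mem_iff.mp hw with rfl | rfl
  · rfl
  · exact SimpleGraph.Adj.reachable (by exact hab)
  · exact SimpleGraph.Adj.reachable (by exact hba)
  · rfl

lemma pull_walk_reach {U : (G.lineGraph).Subgraph} :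
    ∀ {ee ff : U.verts} (_ : U.coe.Walk ee ff) {v w : V}
      (hv : v ∈ ((ee : G.edgeSet) : Sym2 V)) (hw : w ∈ ((ff : G.edgeSet) : Sym2 V)),
      (pull G U).coe.Reachable ⟨v, ⟨ee.1, ee.2, hv⟩⟩ ⟨w, ⟨ff.1, ff.2, hw⟩⟩ := by
  intro ee ff p
  induction p with
  | @nil u => intro v w hv hw; exact reachable_pull_of_mem_edge u.1 u.2 hv hw
  | @cons x y z h p ih =>
    intro v w hv hw
    obtain ⟨-, t, ht1, ht2⟩ := (lineGraph_adj_iff_exists).mp (U.adj_sub h)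
    exact (reachable_pull_of_mem_edge x.1 x.2 hv ht1).trans (ih ht2 hw)

lemma pull_connected {U : (G.lineGraph).Subgraph} (hU : U.Connected) :
    (pull G U).Connected := by
  rw [Subgraph.connected_iff]
  constructor
  · rw [Subgraph.preconnected_iff]
    rintro ⟨v, e, he, hve⟩ ⟨w, f, hf, hwf⟩
    obtain ⟨p⟩ := hU ⟨e, he⟩ ⟨f, hf⟩
    exact pull_walk_reach p hve hwf
  · obtain ⟨e, he⟩ := hU.nonempty
    obtain ⟨a, ha⟩ := sym2_exists_mem (e : Sym2 V)
    exact ⟨a, e, he, ha⟩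

lemma reachable_line_of_share {T : G.Subgraph} {e f : G.edgeSet}
    (he : (e : Sym2 V) ∈ T.edgeSet) (hf : (f : Sym2 V) ∈ T.edgeSet)
    {z : V} (hze : z ∈ (e : Sym2 V)) (hzf : z ∈ (f : Sym2 V)) :
    (lineSubgraph G T).coe.Reachable ⟨e, he⟩ ⟨f, hf⟩ := by
  by_cases hef : e = f
  · subst hef; rfl
  · refine SimpleGraph.Adj.reachable ?_
    exact ⟨he, hf, lineGraph_adj_iff_exists.mpr ⟨hef, z, hze, hzf⟩⟩

lemma line_walk_reach {T : G.Subgraph} :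
    ∀ {a b : T.verts} (_ : T.coe.Walk a b) {e f : G.edgeSet}
      (he : (e : Sym2 V) ∈ T.edgeSet) (hf : (f : Sym2 V) ∈ T.edgeSet)
      (_ : (a : V) ∈ (e : Sym2 V)) (_ : (b : V) ∈ (f : Sym2 V)),
      (lineSubgraph G T).coe.Reachable ⟨e, he⟩ ⟨f, hf⟩ := by
  intro a b p
  induction p with
  | nil => intro e f he hf hae hbf; exact reachable_line_of_share he hf hae hbf
  | @cons x y z h p ih =>
    intro e f he hf hae hbf
    have hT : T.Adj x.1 y.1 := h
    have hgT : s(x.1, y.1) ∈ T.edgeSet := Subgraph.mem_edgeSet.mpr hT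
    have hgG : s(x.1, y.1) ∈ G.edgeSet := T.edgeSet_subset hgT
    refine (reachable_line_of_share he (f := ⟨s(x.1, y.1), hgG⟩) hgT hae
      (Sym2.mem_mk_left _ _)).trans ?_
    exact ih hgT hf (Sym2.mem_mk_right _ _) hbf

lemma lineSubgraph_connected {T : G.Subgraph} (hT : T.Connected)
    (he : T.edgeSet.Nonempty) : (lineSubgraph G T).Connected := by
  rw [Subgraph.connected_iff]
  constructor
  · rw [Subgraph.preconnected_iff]
    rintro ⟨e, he'⟩ ⟨f, hf'⟩
    obtain ⟨a, ha⟩ := sym2_exists_mem (e : Sym2 V)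
    obtain ⟨b, hb⟩ := sym2_exists_mem (f : Sym2 V)
    have haT : a ∈ T.verts := mem_verts_of_mem_edge he' ha
    have hbT : b ∈ T.verts := mem_verts_of_mem_edge hf' hb
    obtain ⟨p⟩ := hT ⟨a, haT⟩ ⟨b, hbT⟩
    exact line_walk_reach p he' hf' ha hb
  · obtain ⟨e, heT⟩ := he
    exact ⟨⟨e, T.edgeSet_subset heT⟩, heT⟩

lemma not_overlapping_singleton (v : V) (T : G.Subgraph) :
    ¬ Overlapping (G.singletonSubgraph v) T := by
  rintro ⟨⟨x, hx1, hx2⟩, hn⟩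
  rw [singletonSubgraph_verts, Set.mem_singleton_iff] at hx1
  subst hx1
  exact hn (Or.inl ((G.singletonSubgraph_le_iff x T).mpr hx2))

lemma singleton_mem_completeTubing {𝒯 : Set G.Subgraph} (h : IsCompleteTubing G 𝒯) (v : V) :
    G.singletonSubgraph v ∈ 𝒯 := by
  have hP : (∀ T ∈ insert (G.singletonSubgraph v) 𝒯, IsTube G T) ∧
      (insert (G.singletonSubgraph v) 𝒯).Pairwise fun S T => ¬ Overlapping S T := by
    constructor
    · rintro T (rfl | hT)
      · exact Subgraph.singletonSubgraph_connected
      · exact h.1.1 T hT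
    · rw [haveI : Std.Symm (fun S T : G.Subgraph => ¬ Overlapping S T) := ⟨fun _ _ h => not_overlapping_symm h⟩; Set.pairwise_insert_of_symm]
      exact ⟨h.1.2, fun T _ _ => not_overlapping_singleton v T⟩
  exact h.2 hP (Set.subset_insert _ _) (Set.mem_insert _ _)

/-- A connected subgraph of the line graph with no edges of `L(G)` to `W` and a common
vertex with `W` has a single vertex. -/
lemma verts_eq_singleton_of_no_cross {U W : (G.lineGraph).Subgraph} (hU : U.Connected)
    (hcross : ¬ ∃ a b, (G.lineGraph).Adj a b ∧ a ∈ U.verts ∧ b ∈ W.verts)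
    {e : G.edgeSet} (heU : e ∈ U.verts) (heW : e ∈ W.verts) : U.verts = {e} := by
  ext g
  simp only [Set.mem_singleton_iff]
  constructor
  · intro hgU
    by_contra hge
    have hne : (⟨e, heU⟩ : U.verts) ≠ ⟨g, hgU⟩ := fun hh => hge (congrArg Subtype.val hh).symm
    obtain ⟨p⟩ := hU ⟨e, heU⟩ ⟨g, hgU⟩
    obtain ⟨x, hadj, q, -⟩ := SimpleGraph.Walk.not_nil_iff.mp
      (SimpleGraph.Walk.not_nil_of_ne hne (p := p))
    exact hcross ⟨x.1, e, (U.adj_sub hadj).symm, x.2, heW⟩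
  · rintro rfl; exact heU

lemma induced_eq_of_verts_eq {U W : (G.lineGraph).Subgraph} (hUi : U.IsInduced)
    (hWi : W.IsInduced) (h : U.verts = W.verts) : U = W := by
  ext e f
  · rw [h]
  · constructor
    · intro ha
      exact hWi (h ▸ U.edge_vert ha) (h ▸ U.edge_vert ha.symm) (U.adj_sub ha)
    · intro ha
      exact hUi (h ▸ W.edge_vert ha) (h ▸ W.edge_vert ha.symm) (W.adj_sub ha)

/-- Pullbacks of compatible induced connected subgraphs do not overlap. -/
lemma not_overlapping_pull {U W : (G.lineGraph).Subgraph} (hUc : U.Connected)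
    (hWc : W.Connected) (hUi : U.IsInduced) (hWi : W.IsInduced)
    (hcompat : Compatible U W ∨ U = W) : ¬ Overlapping (pull G U) (pull G W) := by
  rcases hcompat with hcompat | rfl
  swap
  · exact fun ho => ho.2 (Or.inl le_rfl)
  by_cases hn : Nested U W
  · rintro ⟨-, hn'⟩
    rcases hn with h | h
    · exact hn' (Or.inl (pull_mono h))
    · exact hn' (Or.inr (pull_mono h))
  have hcross : ¬ ∃ a b, (G.lineGraph).Adj a b ∧ a ∈ U.verts ∧ b ∈ W.verts := by
    intro hh
    exact hcompat ⟨hh, hn⟩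
  rintro ⟨⟨v, ⟨e, heU, hve⟩, ⟨f, hfW, hvf⟩⟩, -⟩
  by_cases hef : e = f
  · subst hef
    have hUe : U.verts = {e} := verts_eq_singleton_of_no_cross hUc hcross heU hfW
    have hcross' : ¬ ∃ a b, (G.lineGraph).Adj a b ∧ a ∈ W.verts ∧ b ∈ U.verts := by
      rintro ⟨a, b, hab, ha, hb⟩
      exact hcross ⟨b, a, hab.symm, hb, ha⟩
    have hWe : W.verts = {e} := verts_eq_singleton_of_no_cross hWc hcross' hfW heU
    exact hn (Or.inl (le_of_eq (induced_eq_of_verts_eq hUi hWi (hUe.trans hWe.symm))))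
  · refine hcross ⟨e, f, ?_, heU, hfW⟩
    exact lineGraph_adj_iff_exists.mpr ⟨hef, v, hve, hvf⟩

lemma edgeSet_eq_of_lineSubgraph_eq {T T' : G.Subgraph}
    (h : lineSubgraph G T = lineSubgraph G T') : T.edgeSet = T'.edgeSet := by
  have hv : (lineSubgraph G T).verts = (lineSubgraph G T').verts := by rw [h]
  ext e
  constructor
  · intro he
    have : (⟨e, T.edgeSet_subset he⟩ : G.edgeSet) ∈ (lineSubgraph G T).verts := he
    rw [hv] at this; exact this
  · intro he
    have : (⟨e, T'.edgeSet_subset he⟩ : G.edgeSet) ∈ (lineSubgraph G T').verts := he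
    rw [← hv] at this; exact this

/-- The forward map sends complete tubings to admissible tubings. -/
lemma fwd {𝒯 : Set G.Subgraph} (h : IsCompleteTubing G 𝒯) :
    IsAdmissibleTubing G.lineGraph (lineSubgraph G '' {T ∈ 𝒯 | T.edgeSet.Nonempty}) := by
  constructor
  · constructor
    · rintro U ⟨T, ⟨hT𝒯, hTe⟩, rfl⟩
      exact ⟨lineSubgraph_connected (h.1.1 T hT𝒯) hTe, lineSubgraph_isInduced T⟩
    · rintro U ⟨T₁, ⟨h₁, he₁⟩, rfl⟩ W ⟨T₂, ⟨h₂, he₂⟩, rfl⟩ hne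
      rintro ⟨⟨e, f, hadj, heU, hfW⟩, hnest⟩
      have hT : T₁ ≠ T₂ := fun hh => hne (by rw [hh])
      have hno := h.1.2 h₁ h₂ hT
      by_cases hn : Nested T₁ T₂
      · rcases hn with hn | hn
        · exact hnest (Or.inl (lineSubgraph_mono hn))
        · exact hnest (Or.inr (lineSubgraph_mono hn))
      · obtain ⟨-, z, hz1, hz2⟩ := lineGraph_adj_iff_exists.mp hadj
        exact hno ⟨⟨z, mem_verts_of_mem_edge heU hz1, mem_verts_of_mem_edge hfW hz2⟩, hn⟩
  · -- maximality
    intro 𝒮' hP hsub U hU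
    -- show `pull G U` can be added to `𝒯`
    obtain ⟨hUc, hUi⟩ := hP.1 U hU
    have hins : (∀ T ∈ insert (pull G U) 𝒯, IsTube G T) ∧
        (insert (pull G U) 𝒯).Pairwise fun S T => ¬ Overlapping S T := by
      constructor
      · rintro T (rfl | hT)
        · exact pull_connected hUc
        · exact h.1.1 T hT
      · rw [haveI : Std.Symm (fun S T : G.Subgraph => ¬ Overlapping S T) := ⟨fun _ _ h => not_overlapping_symm h⟩; Set.pairwise_insert_of_symm]
        refine ⟨h.1.2, fun T hT hne => ?_⟩
        by_cases hTe : T.edgeSet.Nonempty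
        · have hLT : lineSubgraph G T ∈ 𝒮' := hsub ⟨T, ⟨hT, hTe⟩, rfl⟩
          have hTc : T.Connected := h.1.1 T hT
          have hcompat : Compatible U (lineSubgraph G T) ∨ U = lineSubgraph G T := by
            by_cases hUL : U = lineSubgraph G T
            · exact Or.inr hUL
            · exact Or.inl (hP.2 hU hLT hUL)
          have := not_overlapping_pull hUc (lineSubgraph_connected hTc hTe) hUi
            (lineSubgraph_isInduced T) hcompat
          rwa [pull_lineSubgraph_eq hTc hTe] at this
        · obtain ⟨v, rfl⟩ := eq_singleton_of_edgeless (h.1.1 T hT) hTe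
          exact not_overlapping_symm (not_overlapping_singleton v _)
    have hmem : pull G U ∈ 𝒯 := h.2 hins (Set.subset_insert _ _) (Set.mem_insert _ _)
    refine ⟨pull G U, ⟨hmem, pull_edgeSet_nonempty hUc.nonempty⟩, ?_⟩
    exact lineSubgraph_pull_eq hUi

/-- The candidate inverse: singletons together with pullbacks. -/
def back (G : SimpleGraph V) (S : Set (G.lineGraph).Subgraph) : Set G.Subgraph :=
  Set.range G.singletonSubgraph ∪ pull G '' S

lemma bwd {S : Set (G.lineGraph).Subgraph} (hS : IsAdmissibleTubing G.lineGraph S) :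
    IsCompleteTubing G (back G S) := by
  constructor
  · constructor
    · rintro T (⟨v, rfl⟩ | ⟨U, hU, rfl⟩)
      · exact Subgraph.singletonSubgraph_connected
      · exact pull_connected (hS.1.1 U hU).1
    · rintro A (⟨v, rfl⟩ | ⟨U, hU, rfl⟩) B hB hne
      · exact not_overlapping_singleton v B
      · rcases hB with ⟨w, rfl⟩ | ⟨W, hW, rfl⟩
        · exact not_overlapping_symm (not_overlapping_singleton w _)
        · refine not_overlapping_pull (hS.1.1 U hU).1 (hS.1.1 W hW).1
            (hS.1.1 U hU).2 (hS.1.1 W hW).2 ?_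
          by_cases hUW : U = W
          · exact Or.inr hUW
          · exact Or.inl (hS.1.2 hU hW hUW)
  · -- maximality
    intro 𝒞' hP hsub T hT
    by_cases hTe : T.edgeSet.Nonempty
    swap
    · obtain ⟨v, rfl⟩ := eq_singleton_of_edgeless (hP.1 T hT) hTe
      exact Or.inl ⟨v, rfl⟩
    · have hTc : T.Connected := hP.1 T hT
      have hins : (∀ U ∈ insert (lineSubgraph G T) S, IsTube G.lineGraph U ∧ U.IsInduced) ∧
          (insert (lineSubgraph G T) S).Pairwise Compatible := by
        constructor
        · rintro U (rfl | hU)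
          · exact ⟨lineSubgraph_connected hTc hTe, lineSubgraph_isInduced T⟩
          · exact hS.1.1 U hU
        · rw [haveI : Std.Symm (@Compatible _ G.lineGraph) := ⟨fun _ _ h => compatible_symm h⟩; Set.pairwise_insert_of_symm]
          refine ⟨hS.1.2, fun U hU hne => ?_⟩
          have hpm : pull G U ∈ 𝒞' := hsub (Or.inr ⟨U, hU, rfl⟩)
          by_cases hTU : T = pull G U
          · exfalso
            apply hne
            rw [hTU, lineSubgraph_pull_eq (hS.1.1 U hU).2]
          · have hno := hP.2 hT hpm hTU
            by_cases hn : Nested T (pull G U)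
            · rcases hn with hn | hn
              · refine compatible_of_nested (Or.inl ?_)
                have := lineSubgraph_mono hn
                rwa [lineSubgraph_pull_eq (hS.1.1 U hU).2] at this
              · refine compatible_of_nested (Or.inr ?_)
                exact (le_lineSubgraph_pull U).trans (lineSubgraph_mono hn)
            · rintro ⟨⟨e, f, hadj, heT, hfU⟩, -⟩
              obtain ⟨-, z, hz1, hz2⟩ := lineGraph_adj_iff_exists.mp hadj
              exact hno ⟨⟨z, mem_verts_of_mem_edge heT hz1, ⟨f, hfU, hz2⟩⟩, hn⟩
      have hmem : lineSubgraph G T ∈ S := hS.2 hins (Set.subset_insert _ _) (Set.mem_insert _ _)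
      refine Or.inr ⟨lineSubgraph G T, hmem, ?_⟩
      exact pull_lineSubgraph_eq hTc hTe

lemma back_image {S : Set (G.lineGraph).Subgraph} (hS : IsAdmissibleTubing G.lineGraph S) :
    lineSubgraph G '' {T ∈ back G S | T.edgeSet.Nonempty} = S := by
  ext U
  constructor
  · rintro ⟨T, ⟨hT, hTe⟩, rfl⟩
    rcases hT with ⟨v, rfl⟩ | ⟨W, hW, rfl⟩
    · rw [SimpleGraph.edgeSet_singletonSubgraph] at hTe
      exact absurd hTe (by simp)
    · rw [lineSubgraph_pull_eq (hS.1.1 W hW).2]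
      exact hW
  · intro hU
    refine ⟨pull G U, ⟨Or.inr ⟨U, hU, rfl⟩, pull_edgeSet_nonempty (hS.1.1 U hU).1.nonempty⟩, ?_⟩
    exact lineSubgraph_pull_eq (hS.1.1 U hU).2

lemma completeTubing_eq_union {𝒯 : Set G.Subgraph} (h : IsCompleteTubing G 𝒯) :
    𝒯 = Set.range G.singletonSubgraph ∪ {T ∈ 𝒯 | T.edgeSet.Nonempty} := by
  ext T
  constructor
  · intro hT
    by_cases hTe : T.edgeSet.Nonempty
    · exact Or.inr ⟨hT, hTe⟩
    · obtain ⟨v, rfl⟩ := eq_singleton_of_edgeless (h.1.1 T hT) hTe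
      exact Or.inl ⟨v, rfl⟩
  · rintro (⟨v, rfl⟩ | ⟨hT, -⟩)
    · exact singleton_mem_completeTubing h v
    · exact hT

lemma edgy_subset_of_image_subset {𝒯₁ 𝒯₂ : Set G.Subgraph} (h₁ : IsCompleteTubing G 𝒯₁)
    (h₂ : IsCompleteTubing G 𝒯₂)
    (h : lineSubgraph G '' {T ∈ 𝒯₁ | T.edgeSet.Nonempty} ⊆
      lineSubgraph G '' {T ∈ 𝒯₂ | T.edgeSet.Nonempty}) :
    {T ∈ 𝒯₁ | T.edgeSet.Nonempty} ⊆ {T ∈ 𝒯₂ | T.edgeSet.Nonempty} := by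
  rintro T ⟨hT, hTe⟩
  obtain ⟨T', ⟨hT', hT'e⟩, hLT⟩ := h ⟨T, ⟨hT, hTe⟩, rfl⟩
  have : T' = T := eq_of_edgeSet_eq (h₂.1.1 T' hT') (h₁.1.1 T hT) hT'e hTe
    (edgeSet_eq_of_lineSubgraph_eq hLT)
  rw [← this]
  exact ⟨hT', hT'e⟩

theorem completeTubing_equiv_admissible_line' (G : SimpleGraph V) :
    Set.BijOn (fun 𝒯 : Set G.Subgraph => lineSubgraph G '' {T ∈ 𝒯 | T.edgeSet.Nonempty})
      {𝒯 : Set G.Subgraph | IsCompleteTubing G 𝒯}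
      {𝒮 : Set (G.lineGraph).Subgraph | IsAdmissibleTubing G.lineGraph 𝒮} := by
  refine ⟨fun 𝒯 h => fwd h, ?_, ?_⟩
  · intro 𝒯₁ h₁ 𝒯₂ h₂ heq
    simp only [Set.mem_setOf_eq] at h₁ h₂
    have e1 := edgy_subset_of_image_subset h₁ h₂ (le_of_eq heq)
    have e2 := edgy_subset_of_image_subset h₂ h₁ (le_of_eq heq.symm)
    rw [completeTubing_eq_union h₁, completeTubing_eq_union h₂,
      le_antisymm e1 e2]
  · intro S hS
    exact ⟨back G S, bwd hS, back_image hS⟩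


/-- `𝒯 ↦ {L(T) : T ∈ 𝒯 with at least one edge}` is a bijection between
complete tubings of `G` and admissible tubings of `L(G)`. -/
theorem completeTubing_equiv_admissible_line {V : Type*} (G : SimpleGraph V)
    (hG : G.edgeSet.Nonempty) :
    Set.BijOn (fun 𝒯 : Set G.Subgraph => lineSubgraph G '' {T ∈ 𝒯 | T.edgeSet.Nonempty})
      {𝒯 : Set G.Subgraph | IsCompleteTubing G 𝒯}
      {𝒮 : Set (G.lineGraph).Subgraph | IsAdmissibleTubing G.lineGraph 𝒮} :=
  completeTubing_equiv_admissible_line' G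

end Cosmo
end

section
/- Every total order < on the vertex set V of a graph G induces a unique admissible tubing {T_1,…,T_n} of G respecting <, i.e., such that T_i ⊊ T_j implies v_i < v_j, where v_i is the vertex associated to T_i under the canonical bijection. Moreover, every admissible tubing of G arises from some total order on V in this way. -/
open SimpleGraph

namespace Cosmo

variable {V : Type*}

/-! ### Auxiliary development -/

section Aux

variable {G : SimpleGraph V}

/-- The set of vertices reachable from `u` by walks staying inside `A`. -/
def comp (G : SimpleGraph V) (A : Set V) (u : V) : Set V :=
  {z | ∃ p : G.Walk u z, ∀ w ∈ p.support, w ∈ A}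

/-- The induced subgraph on `comp G A u`. -/
def tube (G : SimpleGraph V) (A : Set V) (u : V) : G.Subgraph :=
  (⊤ : G.Subgraph).induce (comp G A u)

lemma comp_subset {A : Set V} {u : V} : comp G A u ⊆ A :=
  fun z ⟨p, hp⟩ => hp z p.end_mem_support

lemma mem_comp_self {A : Set V} {u : V} (h : u ∈ A) : u ∈ comp G A u :=
  ⟨Walk.nil, by simp [h]⟩

lemma mem_comp_of_adj {A : Set V} {u x y : V} (hx : x ∈ comp G A u) (hxy : G.Adj x y)
    (hy : y ∈ A) : y ∈ comp G A u := by
  obtain ⟨p, hp⟩ := hx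
  refine ⟨p.append (Walk.cons hxy Walk.nil), ?_⟩
  intro w hw
  rw [Walk.mem_support_append_iff] at hw
  rcases hw with hw | hw
  · exact hp w hw
  · have hw' : w = x ∨ w = y := by simpa using hw
    rcases hw' with rfl | rfl
    · exact hp _ p.end_mem_support
    · exact hy

lemma comp_comp {A : Set V} {u x : V} (hx : x ∈ comp G A u) : comp G A x ⊆ comp G A u := by
  rintro z ⟨q, hq⟩
  obtain ⟨p, hp⟩ := hx
  refine ⟨p.append q, ?_⟩
  intro w hw
  rw [Walk.mem_support_append_iff] at hw
  rcases hw with hw | hw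
  · exact hp w hw
  · exact hq w hw

lemma mem_comp_support {A : Set V} {u z : V} (p : G.Walk u z) (hp : ∀ w ∈ p.support, w ∈ A) :
    ∀ w ∈ p.support, w ∈ comp G A u := by
  classical
  intro w hw
  exact ⟨p.takeUntil w hw, fun x hx => hp x (p.support_takeUntil_subset hw hx)⟩

@[simp] lemma tube_verts {A : Set V} {u : V} : (tube G A u).verts = comp G A u := rfl

lemma tube_adj {A : Set V} {u a b : V} :
    (tube G A u).Adj a b ↔ a ∈ comp G A u ∧ b ∈ comp G A u ∧ G.Adj a b := by
  simp [tube, Subgraph.induce_adj]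

lemma tube_isInduced {A : Set V} {u : V} : (tube G A u).IsInduced := by
  intro a ha b hb hab
  exact tube_adj.2 ⟨ha, hb, hab⟩

lemma le_tube {A : Set V} {u : V} {H : G.Subgraph} (hv : H.verts ⊆ comp G A u) :
    H ≤ tube G A u := by
  refine ⟨hv, fun a b hab => ?_⟩
  exact tube_adj.2 ⟨hv (H.edge_vert hab), hv (H.edge_vert hab.symm), H.adj_sub hab⟩

/-- Any subgraph of an induced subgraph with the same vertices equals it. -/
lemma eq_of_le_of_verts_eq {H K : G.Subgraph} (hle : H ≤ K) (hv : H.verts = K.verts)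
    (hi : H.IsInduced) : H = K := by
  refine le_antisymm hle ⟨hv.ge, fun a b hab => ?_⟩
  exact hi (hv ▸ K.edge_vert hab) (hv ▸ K.edge_vert hab.symm) (K.adj_sub hab)

lemma reachable_in_tube {A : Set V} {u : V} {a b : V} (p : G.Walk a b)
    (hp : ∀ w ∈ p.support, w ∈ comp G A u) (ha : a ∈ comp G A u) (hb : b ∈ comp G A u) :
    (tube G A u).coe.Reachable ⟨a, ha⟩ ⟨b, hb⟩ := by
  induction p with
  | nil => rfl
  | @cons a c b hac q ih =>
    have hc : c ∈ comp G A u := hp c (by simp [Walk.support_cons])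
    have h1 : (tube G A u).coe.Adj ⟨a, ha⟩ ⟨c, hc⟩ := by
      simp only [Subgraph.coe_adj]
      exact tube_adj.2 ⟨ha, hc, hac⟩
    exact (h1.reachable).trans (ih (fun w hw => hp w (by simp [Walk.support_cons, hw])) hc hb)

lemma tube_connected {A : Set V} {u : V} (h : u ∈ A) : (tube G A u).Connected := by
  rw [Subgraph.connected_iff]
  constructor
  · constructor
    rintro ⟨a, ha⟩ ⟨b, hb⟩
    have hu : u ∈ comp G A u := mem_comp_self h
    obtain ⟨p, hp⟩ := id ha
    obtain ⟨q, hq⟩ := id hb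
    have r1 := reachable_in_tube p (mem_comp_support p hp) hu ha
    have r2 := reachable_in_tube q (mem_comp_support q hq) hu hb
    exact r1.symm.trans r2
  · exact ⟨u, mem_comp_self h⟩

lemma tube_isTube {A : Set V} {u : V} (h : u ∈ A) : IsTube G (tube G A u) := tube_connected h

/-- The vertices of a connected subgraph containing `u`, with all vertices in `A`,
are contained in `comp G A u`. -/
lemma verts_subset_comp {A : Set V} {u : V} {H : G.Subgraph} (hc : H.Connected)
    (hu : u ∈ H.verts) (hA : H.verts ⊆ A) : H.verts ⊆ comp G A u := by
  intro x hx
  obtain ⟨p⟩ := hc.coe ⟨u, hu⟩ ⟨x, hx⟩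
  refine ⟨p.map H.hom, ?_⟩
  intro w hw
  have hw2 : w ∈ (p.map H.hom).support := hw
  rw [Walk.support_map] at hw2
  obtain ⟨⟨w', hw'⟩, _, rfl⟩ := List.mem_map.1 hw2
  exact hA hw'

/-- A boundary edge along a walk that starts in `A` and leaves `A`. -/
lemma exists_boundary {A : Set V} {a b : V} (p : G.Walk a b) (ha : a ∈ A) (hb : b ∉ A) :
    ∃ x y, G.Adj x y ∧ x ∈ A ∧ y ∉ A ∧ y ∈ p.support := by
  induction p with
  | nil => exact absurd ha hb
  | @cons a c b hac q ih =>
    by_cases hc : c ∈ A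
    · obtain ⟨x, y, h1, h2, h3, h4⟩ := ih hc hb
      exact ⟨x, y, h1, h2, h3, by simp [Walk.support_cons]; right; exact h4⟩
    · exact ⟨a, c, hac, ha, hc, by simp [Walk.support_cons]⟩

instance [Finite V] : Finite (G.Subgraph) := by
  apply Finite.of_injective (fun H => (H.verts, {p : V × V | H.Adj p.1 p.2}))
  intro H H' h
  rw [Prod.ext_iff] at h
  refine Subgraph.ext h.1 ?_
  ext a b
  exact Set.ext_iff.1 h.2 (a, b)

lemma compatible_symm_s7 {S T : G.Subgraph} (h : Compatible S T) : Compatible T S := by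
  rintro ⟨⟨u, w, hadj, hu, hw⟩, hn⟩
  exact h ⟨⟨w, u, hadj.symm, hw, hu⟩, fun h' => hn h'.symm⟩

/-- Compatible tubes that share a vertex are nested. -/
lemma nested_of_compatible_of_mem {S T : G.Subgraph} (hS : S.Connected)
    (hc : Compatible S T) {x : V} (hxS : x ∈ S.verts) (hxT : x ∈ T.verts) : Nested S T := by
  by_contra hn
  apply hc
  refine ⟨?_, hn⟩
  by_cases hs : S.verts = {x}
  · exfalso
    apply hn
    left
    refine ⟨by rw [hs]; simpa using hxT, fun a b hab => ?_⟩
    exfalso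
    have ha : a ∈ S.verts := S.edge_vert hab
    have hb : b ∈ S.verts := S.edge_vert hab.symm
    rw [hs] at ha hb
    simp only [Set.mem_singleton_iff] at ha hb
    subst ha; subst hb
    exact (S.adj_sub hab).ne rfl
  · have : ∃ y ∈ S.verts, y ≠ x := by
      by_contra hy
      push_neg at hy
      exact hs (Set.eq_singleton_iff_unique_mem.2 ⟨hxS, fun y hy' => hy y hy'⟩)
    obtain ⟨y, hyS, hyx⟩ := this
    obtain ⟨p⟩ := hS.coe ⟨x, hxS⟩ ⟨y, hyS⟩
    cases p with
    | nil => exact absurd rfl (by exact_mod_cast hyx)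
    | @cons _ c _ hxc q =>
      have hc' : S.Adj x c := by simpa using hxc
      exact ⟨c, x, (S.adj_sub hc').symm, S.edge_vert hc'.symm, hxT⟩

/-- Adding a compatible induced tube to an admissible tubing: by maximality it is a member. -/
lemma mem_of_compatible {𝒯 : Set G.Subgraph} (h𝒯 : IsAdmissibleTubing G 𝒯)
    {W : G.Subgraph} (hW : IsTube G W) (hWi : W.IsInduced)
    (hcomp : ∀ S ∈ 𝒯, Compatible S W) : W ∈ 𝒯 := by
  have h := h𝒯.2 (y := insert W 𝒯) ?_ (Set.subset_insert _ _)
  · exact h (Set.mem_insert _ _)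
  constructor
  · rintro T (rfl | hT)
    · exact ⟨hW, hWi⟩
    · exact h𝒯.1.1 T hT
  · apply Set.Pairwise.insert h𝒯.1.2
    intro S hS _
    exact ⟨compatible_symm_s7 (hcomp S hS), hcomp S hS⟩

end Aux

section Order

variable {G : SimpleGraph V} (r : LinearOrder V)

/-- The set of vertices `r`-below `v`. -/
def below (r : LinearOrder V) (v : V) : Set V := {w | r.le w v}

/-- The canonical tube of `v` w.r.t. the order `r`. -/
def rTube (G : SimpleGraph V) (r : LinearOrder V) (v : V) : G.Subgraph :=
  tube G (below r v) v

lemma mem_rTube_self (v : V) : v ∈ (rTube G r v).verts := by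
  letI := r; exact mem_comp_self (le_refl v)

lemma le_of_mem_rTube {u v : V} (h : u ∈ (rTube G r v).verts) : r.le u v := by
  letI := r
  exact (comp_subset (G := G) (A := below r v) (u := v) h : u ∈ below r v)

lemma rTube_isTube (v : V) : IsTube G (rTube G r v) := by
  letI := r; exact tube_isTube (le_refl v)

lemma rTube_isInduced (v : V) : (rTube G r v).IsInduced := tube_isInduced

lemma rTube_inj : Function.Injective (rTube G r) := by
  intro u v h
  have h1 : u ∈ (rTube G r v).verts := h ▸ mem_rTube_self r u
  have h2 : v ∈ (rTube G r u).verts := h.symm ▸ mem_rTube_self r v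
  letI := r
  exact le_antisymm (le_of_mem_rTube r h1) (le_of_mem_rTube r h2)

lemma rTube_lt_imp {u v : V} (h : rTube G r u < rTube G r v) : r.lt u v := by
  letI := r
  have hle : r.le u v := le_of_mem_rTube r (h.le.1 (mem_rTube_self r u))
  have hne : u ≠ v := fun h' => h.ne (h' ▸ rfl)
  exact lt_of_le_of_ne hle hne

/-- If there is an edge between the tubes of `u` and `v` with `u ≤ v`,
then the tube of `u` is contained in that of `v`. -/
lemma rTube_le_of_edge {u v x y : V} (huv : r.le u v) (hx : x ∈ (rTube G r u).verts)
    (hy : y ∈ (rTube G r v).verts) (hxy : G.Adj x y) : rTube G r u ≤ rTube G r v := by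
  letI := r
  apply le_tube
  intro z hz
  have hxv : x ∈ comp G (below r v) v :=
    mem_comp_of_adj hy hxy.symm (le_trans (le_of_mem_rTube r hx) huv)
  obtain ⟨p, hp⟩ := hx
  obtain ⟨q, hq⟩ := hz
  have hzx : z ∈ comp G (below r v) x := by
    refine ⟨p.reverse.append q, ?_⟩
    intro w hw
    rw [Walk.mem_support_append_iff] at hw
    have hwu : w ∈ below r u := by
      rcases hw with hw | hw
      · exact hp w (by simpa using hw)
      · exact hq w hw
    exact le_trans hwu huv
  exact comp_comp hxv hzx

lemma rTube_compatible {u v : V} : Compatible (rTube G r u) (rTube G r v) := by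
  letI := r
  rintro ⟨⟨x, y, hxy, hx, hy⟩, hn⟩
  rcases le_total u v with h | h
  · exact hn (Or.inl (rTube_le_of_edge r h hx hy hxy))
  · exact hn (Or.inr (rTube_le_of_edge r h hy hx hxy.symm))

/-- A connected subgraph whose vertices are `r`-bounded by a member `v` lies in `rTube v`. -/
lemma le_rTube_of_bounded {W : G.Subgraph} (hc : W.Connected) {v : V} (hv : v ∈ W.verts)
    (hb : ∀ z ∈ W.verts, r.le z v) : W ≤ rTube G r v :=
  le_tube (verts_subset_comp hc hv hb)

end Order

section Main

variable [Fintype V] {G : SimpleGraph V}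

/-- The canonical tubing associated to a linear order. -/
def rTubing (G : SimpleGraph V) (r : LinearOrder V) : Set G.Subgraph := Set.range (rTube G r)

lemma rTubing_admissible (r : LinearOrder V) : IsAdmissibleTubing G (rTubing G r) := by
  constructor
  · constructor
    · rintro T ⟨v, rfl⟩
      exact ⟨rTube_isTube r v, rTube_isInduced r v⟩
    · rintro S ⟨u, rfl⟩ T ⟨v, rfl⟩ _
      exact rTube_compatible r
  · rintro 𝒞 ⟨h1, h2⟩ hsub W hW
    letI := r
    have hWt : W.Connected := (h1 W hW).1
    have hWi : W.IsInduced := (h1 W hW).2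
    obtain ⟨v, hv, hvmax⟩ := Set.exists_max_image W.verts id (Set.toFinite _) hWt.nonempty
    have hle : W ≤ rTube G r v := le_rTube_of_bounded r hWt hv hvmax
    have hverts : W.verts = (rTube G r v).verts := by
      apply Set.Subset.antisymm hle.1
      by_contra hne
      obtain ⟨y0, hy0, hy0W⟩ := Set.not_subset.1 hne
      obtain ⟨q, hq⟩ := hy0
      obtain ⟨x, y, hxy, hxW, hyW, hysup⟩ := exists_boundary q hv hy0W
      have hyv : r.le y v := hq y hysup
      have hyvne : y ≠ v := fun h => hyW (h ▸ hv)
      -- W and rTube y are incompatible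
      have hTy : rTube G r y ∈ 𝒞 := hsub ⟨y, rfl⟩
      have hne' : W ≠ rTube G r y := fun h =>
        hyW (h ▸ (mem_rTube_self r y : y ∈ (rTube G r y).verts))
      have hcompat := h2 hW hTy hne'
      apply hcompat
      constructor
      · exact ⟨x, y, hxy, hxW, mem_rTube_self r y⟩
      · rintro (h | h)
        · have : r.le v y := le_of_mem_rTube r (h.1 hv)
          exact hyvne (le_antisymm hyv this)
        · exact hyW (h.1 (mem_rTube_self r y))
    have : W = rTube G r v := eq_of_le_of_verts_eq hle hverts hWi
    exact ⟨v, this.symm⟩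

lemma rTube_labeling (r : LinearOrder V) : IsVertexLabeling G (rTubing G r) (rTube G r) := by
  refine ⟨⟨fun v _ => ⟨v, rfl⟩, fun u _ v _ h => rTube_inj r h, ?_⟩, ?_⟩
  · rintro S ⟨v, rfl⟩
    exact ⟨v, Set.mem_univ v, rfl⟩
  · intro v
    refine ⟨mem_rTube_self r v, ?_⟩
    rintro S ⟨u, rfl⟩ hlt hmem
    letI := r
    have h1 : r.le v u := le_of_mem_rTube r hmem
    have h2 : r.le u v := le_of_mem_rTube r (hlt.le.1 (mem_rTube_self r u))
    exact hlt.ne (congrArg (rTube G r) (le_antisymm h2 h1))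

/-- Labelings are unique. -/
lemma labeling_unique {𝒯 : Set G.Subgraph} (h𝒯 : IsAdmissibleTubing G 𝒯)
    {g g' : V → G.Subgraph} (hg : IsVertexLabeling G 𝒯 g) (hg' : IsVertexLabeling G 𝒯 g') :
    g = g' := by
  funext v
  by_contra hne
  have hgm : g v ∈ 𝒯 := hg.1.1 (Set.mem_univ v)
  have hg'm : g' v ∈ 𝒯 := hg'.1.1 (Set.mem_univ v)
  have hcon : (g v).Connected := (h𝒯.1.1 _ hgm).1
  have hcompat : Compatible (g v) (g' v) := h𝒯.1.2 hgm hg'm hne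
  have hnested := nested_of_compatible_of_mem hcon hcompat (hg.2 v).1 (hg'.2 v).1
  rcases hnested with h | h
  · exact (hg'.2 v).2 (g v) hgm (lt_of_le_of_ne h hne) (hg.2 v).1
  · exact (hg.2 v).2 (g' v) hg'm (lt_of_le_of_ne h (Ne.symm hne)) (hg'.2 v).1

/-- Every vertex lies in some tube of an admissible tubing. -/
lemma exists_mem_tubing {𝒯 : Set G.Subgraph} (h𝒯 : IsAdmissibleTubing G 𝒯) (v : V) :
    ∃ S ∈ 𝒯, v ∈ S.verts := by
  set W : G.Subgraph := tube G Set.univ v with hW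
  have hWmem : W ∈ 𝒯 := by
    apply mem_of_compatible h𝒯 (tube_isTube (Set.mem_univ v)) tube_isInduced
    intro S hS
    rintro ⟨⟨x, y, hxy, hxS, hyW⟩, hn⟩
    apply hn
    left
    -- S ≤ W
    have hxW : x ∈ comp G Set.univ v := mem_comp_of_adj hyW hxy.symm (Set.mem_univ x)
    have hcon : S.Connected := (h𝒯.1.1 S hS).1
    have h1 : S.verts ⊆ comp G Set.univ x := verts_subset_comp hcon hxS fun z _ => Set.mem_univ z
    exact le_tube (fun z hz => comp_comp hxW (h1 hz))
  exact ⟨W, hWmem, mem_comp_self (Set.mem_univ v)⟩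

/-- The minimal tube containing a vertex. -/
lemma exists_min_tube {𝒯 : Set G.Subgraph} (h𝒯 : IsAdmissibleTubing G 𝒯) (v : V) :
    ∃ S ∈ 𝒯, v ∈ S.verts ∧ ∀ T ∈ 𝒯, v ∈ T.verts → S ≤ T := by
  set s : Set G.Subgraph := {S ∈ 𝒯 | v ∈ S.verts} with hs
  have hne : s.Nonempty := by
    obtain ⟨S, h1, h2⟩ := exists_mem_tubing h𝒯 v
    exact ⟨S, h1, h2⟩
  obtain ⟨m, hm, hmin⟩ := Set.Finite.exists_minimalFor id s (Set.toFinite _) hne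
  refine ⟨m, hm.1, hm.2, ?_⟩
  intro T hT hvT
  by_cases hmT : m = T
  · exact hmT.le
  have hcompat : Compatible m T := h𝒯.1.2 hm.1 hT hmT
  have hcon : m.Connected := (h𝒯.1.1 m hm.1).1
  rcases nested_of_compatible_of_mem hcon hcompat hm.2 hvT with h | h
  · exact h
  · exact hmin ⟨hT, hvT⟩ h

/-- Each tube of an admissible tubing contains a private vertex. -/
lemma exists_private {𝒯 : Set G.Subgraph} (h𝒯 : IsAdmissibleTubing G 𝒯) {S : G.Subgraph}
    (hS : S ∈ 𝒯) : ∃ v ∈ S.verts, ∀ R ∈ 𝒯, R < S → v ∉ R.verts := by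
  by_contra hcon
  push_neg at hcon
  have hcov : ∀ v ∈ S.verts, ∃ R ∈ 𝒯, R < S ∧ v ∈ R.verts := by
    intro v hv
    obtain ⟨R, hR1, hR2, hR3⟩ := hcon v hv
    exact ⟨R, hR1, hR2, hR3⟩
  have hScon : S.Connected := (h𝒯.1.1 S hS).1
  obtain ⟨v0, hv0⟩ := hScon.nonempty
  set P : Set G.Subgraph := {R ∈ 𝒯 | R < S} with hP
  have hPne : P.Nonempty := by
    obtain ⟨R, h1, h2, _⟩ := hcov v0 hv0
    exact ⟨R, h1, h2⟩
  obtain ⟨R₀, hR₀, hmax⟩ := Set.Finite.exists_maximalFor id P (Set.toFinite _) hPne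
  have hR₀S : R₀ ≤ S := hR₀.2.le
  have hR₀i : R₀.IsInduced := (h𝒯.1.1 R₀ hR₀.1).2
  have hvne : R₀.verts ≠ S.verts := by
    intro h
    exact hR₀.2.ne (eq_of_le_of_verts_eq hR₀S h hR₀i)
  obtain ⟨y, hyS, hyR₀⟩ : ∃ y ∈ S.verts, y ∉ R₀.verts := by
    by_contra hy
    push_neg at hy
    exact hvne (Set.Subset.antisymm hR₀S.1 hy)
  obtain ⟨x0, hx0⟩ := (h𝒯.1.1 R₀ hR₀.1).1.nonempty
  -- a walk within S from x0 to y
  have hyc : y ∈ comp G S.verts x0 :=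
    verts_subset_comp hScon (hR₀S.1 hx0) (fun z hz => hz) hyS
  obtain ⟨p, hp⟩ := hyc
  obtain ⟨x, y', hxy, hxR, hyR, hysup⟩ := exists_boundary p hx0 hyR₀
  have hy'S : y' ∈ S.verts := hp y' hysup
  obtain ⟨R', hR'1, hR'2, hR'3⟩ := hcov y' hy'S
  have hRne : R₀ ≠ R' := fun h => hyR (h ▸ hR'3)
  have hcompat : Compatible R₀ R' := h𝒯.1.2 hR₀.1 hR'1 hRne
  apply hcompat
  constructor
  · exact ⟨x, y', hxy, hxR, hR'3⟩
  · rintro (h | h)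
    · exact hRne (le_antisymm h (hmax ⟨hR'1, hR'2⟩ h))
    · exact hyR (h.1 hR'3)

/-- Each tube of an admissible tubing contains at most one private vertex. -/
lemma private_unique {𝒯 : Set G.Subgraph} (h𝒯 : IsAdmissibleTubing G 𝒯) {S : G.Subgraph}
    (hS : S ∈ 𝒯) {u v : V} (hu : u ∈ S.verts) (hv : v ∈ S.verts)
    (hpu : ∀ R ∈ 𝒯, R < S → u ∉ R.verts) (hpv : ∀ R ∈ 𝒯, R < S → v ∉ R.verts) : u = v := by
  by_contra hne
  set A : Set V := S.verts \ {v} with hA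
  have huA : u ∈ A := ⟨hu, hne⟩
  set W : G.Subgraph := tube G A u with hWdef
  have hSi : S.IsInduced := (h𝒯.1.1 S hS).2
  have hWS : W ≤ S := by
    refine ⟨fun z hz => (comp_subset hz).1, fun a b hab => ?_⟩
    rw [tube_adj] at hab
    exact hSi (comp_subset hab.1).1 (comp_subset hab.2.1).1 hab.2.2
  have hvW : v ∉ W.verts := fun h => (comp_subset h).2 rfl
  have hWltS : W < S := lt_of_le_of_ne hWS (fun h => hvW (h ▸ hv))
  have hWmem : W ∈ 𝒯 := by
    apply mem_of_compatible h𝒯 (tube_isTube huA) tube_isInduced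
    intro R hR
    rintro ⟨⟨x, y, hxy, hxR, hyW⟩, hn⟩
    by_cases hnSR : Nested S R
    · rcases hnSR with h | h
      · exact hn (Or.inr (hWS.trans h))
      · by_cases hRS : R = S
        · exact hn (Or.inr (hRS ▸ hWS))
        · -- R < S; then R ≤ W
          have hRlt : R < S := lt_of_le_of_ne h hRS
          have hvR : v ∉ R.verts := hpv R hR hRlt
          have huR : u ∉ R.verts := hpu R hR hRlt
          have hxA : x ∈ A := ⟨h.1 hxR, fun hxv => hvR (hxv ▸ hxR)⟩
          have hxW : x ∈ comp G A u := mem_comp_of_adj hyW hxy.symm hxA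
          have hRA : R.verts ⊆ A := fun z hz =>
            ⟨h.1 hz, fun hzv => hvR (hzv ▸ hz)⟩
          have hRcon : R.Connected := (h𝒯.1.1 R hR).1
          have h1 : R.verts ⊆ comp G A x := verts_subset_comp hRcon hxR hRA
          exact hn (Or.inl (le_tube (fun z hz => comp_comp hxW (h1 hz))))
    · -- R not nested with S: but compatible, so no edge between R and S; contradiction
      have hRSne : R ≠ S := fun h => hnSR (h ▸ Or.inl le_rfl)
      have hcompat : Compatible R S := h𝒯.1.2 hR hS hRSne
      exact hcompat ⟨⟨x, y, hxy, hxR, hWS.1 hyW⟩, fun hh => hnSR (Or.symm hh)⟩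
  exact hpu W hWmem hWltS (mem_comp_self huA)

/-- The bijection lemma: every admissible tubing has a vertex labeling. -/
lemma exists_labeling {𝒯 : Set G.Subgraph} (h𝒯 : IsAdmissibleTubing G 𝒯) :
    ∃ g : V → G.Subgraph, IsVertexLabeling G 𝒯 g := by
  choose g hg1 hg2 hg3 using exists_min_tube h𝒯
  have hpriv : ∀ v, ∀ R ∈ 𝒯, R < g v → v ∉ R.verts := by
    intro v R hR hlt hvR
    exact absurd (hg3 v R hR hvR) (not_le_of_gt hlt)
  refine ⟨g, ⟨⟨fun v _ => hg1 v, ?_, ?_⟩, fun v => ⟨hg2 v, hpriv v⟩⟩⟩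
  · -- injective
    intro a _ b _ hab
    refine private_unique h𝒯 (hg1 b) (by rw [← hab]; exact hg2 a) (hg2 b)
      (fun R hR hlt => hpriv a R hR (by rw [hab]; exact hlt)) (hpriv b)
  · -- surjective
    rintro S hS
    obtain ⟨v, hv, hpv⟩ := exists_private h𝒯 hS
    refine ⟨v, Set.mem_univ v, ?_⟩
    have hle : g v ≤ S := hg3 v S hS hv
    by_contra hne
    exact hpv (g v) (hg1 v) (lt_of_le_of_ne hle hne) (hg2 v)

/-- The key rigidity lemma: a labeling respecting `r` must be the canonical tube map. -/
lemma labeling_eq_rTube {𝒯 : Set G.Subgraph} (h𝒯 : IsAdmissibleTubing G 𝒯)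
    {g : V → G.Subgraph} (hg : IsVertexLabeling G 𝒯 g) (r : LinearOrder V)
    (H : ∀ u v : V, g u < g v → r.lt u v) : ∀ v, g v = rTube G r v := by
  have hginj : Function.Injective g := fun a b h =>
    hg.1.2.1 (Set.mem_univ a) (Set.mem_univ b) h
  letI := r
  intro v
  have hgm : ∀ w, g w ∈ 𝒯 := fun w => hg.1.1 (Set.mem_univ w)
  have hcon : ∀ w, (g w).Connected := fun w => (h𝒯.1.1 _ (hgm w)).1
  have hind : ∀ w, (g w).IsInduced := fun w => (h𝒯.1.1 _ (hgm w)).2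
  -- Claim 1: every vertex of g v is r-below v
  have claim1 : ∀ z ∈ (g v).verts, r.le z v := by
    intro z hz
    by_cases hzv : z = v
    · exact hzv ▸ le_refl v
    have hgzv : g z ≠ g v := fun h => hzv (hginj h)
    have hcompat : Compatible (g z) (g v) := h𝒯.1.2 (hgm z) (hgm v) hgzv
    rcases nested_of_compatible_of_mem (hcon z) hcompat (hg.2 z).1 hz with h | h
    · exact le_of_lt (H z v (lt_of_le_of_ne h hgzv) : r.lt z v)
    · exact absurd hz ((hg.2 z).2 (g v) (hgm v) (lt_of_le_of_ne h (Ne.symm hgzv)))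
  have claim2 : g v ≤ rTube G r v := le_rTube_of_bounded r (hcon v) (hg.2 v).1 claim1
  -- Claim 3: comp is inside g v
  have claim3 : (rTube G r v).verts ⊆ (g v).verts := by
    rintro z ⟨p, hp⟩
    -- walk from v to z with support r-below v; walk stays in (g v).verts
    clear claim2
    revert hp
    have hstart : v ∈ (g v).verts := (hg.2 v).1
    -- induction on the walk
    suffices h : ∀ (a b : V) (p : G.Walk a b), (∀ w ∈ p.support, r.le w v) →
        a ∈ (g v).verts → b ∈ (g v).verts by
      intro hp
      exact h v z p hp hstart
    intro a b p
    induction p with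
    | nil => exact fun _ h => h
    | @cons a c b hac q ih =>
      intro hsup ha
      have hcv : r.le c v := hsup c (by simp [Walk.support_cons])
      by_cases hc : c ∈ (g v).verts
      · exact ih (fun w hw => hsup w (by simp [Walk.support_cons, hw])) hc
      · exfalso
        have hgcv : g c ≠ g v := fun h => hc (h ▸ (hg.2 c).1)
        have hcompat : Compatible (g v) (g c) := h𝒯.1.2 (hgm v) (hgm c) (Ne.symm hgcv)
        have hinc : Incompatible (g v) (g c) := by
          refine ⟨⟨a, c, hac, ha, (hg.2 c).1⟩, ?_⟩
          rintro (h | h)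
          · have hvc : (v : V) < c := H v c (lt_of_le_of_ne h (Ne.symm hgcv))
            exact absurd (hcv : c ≤ v) (not_le_of_gt hvc)
          · exact hc (h.1 (hg.2 c).1)
        exact hcompat hinc
  have hverts : (g v).verts = (rTube G r v).verts := Set.Subset.antisymm claim2.1 claim3
  exact eq_of_le_of_verts_eq claim2 hverts (hind v)

theorem admissibleTubing_of_linearOrder' (G : SimpleGraph V) :
    (∀ r : LinearOrder V, ∃! 𝒯 : Set G.Subgraph, IsAdmissibleTubing G 𝒯 ∧
        ∀ g : V → G.Subgraph, IsVertexLabeling G 𝒯 g →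
          ∀ u v : V, g u < g v → r.lt u v) ∧
    (∀ 𝒯 : Set G.Subgraph, IsAdmissibleTubing G 𝒯 →
      ∃ r : LinearOrder V,
        ∀ g : V → G.Subgraph, IsVertexLabeling G 𝒯 g →
          ∀ u v : V, g u < g v → r.lt u v) := by
  constructor
  · intro r
    refine ⟨rTubing G r, ⟨rTubing_admissible r, ?_⟩, ?_⟩
    · intro g hg u v hlt
      have := labeling_unique (rTubing_admissible r) hg (rTube_labeling r)
      rw [this] at hlt
      exact rTube_lt_imp r hlt
    · rintro 𝒯' ⟨h1, h2⟩
      obtain ⟨g, hg⟩ := exists_labeling h1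
      have heq : ∀ v, g v = rTube G r v := labeling_eq_rTube h1 hg r (h2 g hg)
      have : g = rTube G r := funext heq
      calc 𝒯' = g '' Set.univ := (hg.1.image_eq).symm
        _ = Set.range g := Set.image_univ
        _ = Set.range (rTube G r) := by rw [this]
  · intro 𝒯 h𝒯
    obtain ⟨g, hg⟩ := exists_labeling h𝒯
    have hginj : Function.Injective g := fun a b h =>
      hg.1.2.1 (Set.mem_univ a) (Set.mem_univ b) h
    letI po : PartialOrder V := PartialOrder.lift g hginj
    letI r : LinearOrder V :=
      LinearOrder.lift' (toLinearExtension : V → LinearExtension V) (fun a b h => h)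
    refine ⟨r, ?_⟩
    intro g' hg' u v hlt
    have hgg : g' = g := labeling_unique h𝒯 hg' hg
    rw [hgg] at hlt
    have hpo : po.lt u v := hlt
    have h1 : (toLinearExtension : V →o LinearExtension V) u ≤ toLinearExtension v :=
      toLinearExtension.monotone hpo.le
    have h2 : (toLinearExtension : V →o LinearExtension V) u ≠ toLinearExtension v := by
      intro h
      exact hpo.ne (h : u = v)
    exact lt_of_le_of_ne h1 h2

end Main

/-- every total order on the vertices induces a unique admissible tubing
respecting it (strictly smaller tubes have smaller associated vertices), and every
admissible tubing arises from some total order in this way. -/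
theorem admissibleTubing_of_linearOrder {V : Type*} [Fintype V] (G : SimpleGraph V) :
    (∀ r : LinearOrder V, ∃! 𝒯 : Set G.Subgraph, IsAdmissibleTubing G 𝒯 ∧
        ∀ g : V → G.Subgraph, IsVertexLabeling G 𝒯 g →
          ∀ u v : V, g u < g v → r.lt u v) ∧
    (∀ 𝒯 : Set G.Subgraph, IsAdmissibleTubing G 𝒯 →
      ∃ r : LinearOrder V,
        ∀ g : V → G.Subgraph, IsVertexLabeling G 𝒯 g →
          ∀ u v : V, g u < g v → r.lt u v) :=
  admissibleTubing_of_linearOrder' G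

end Cosmo
end
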